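/- Let w ≥ 1, let D have Serre functor 𝕊, and let S be a w-orthogonal collection that is an 𝕊_{-w}-subcategory with ⟨S⟩ functorially finite. Set Z = S^{⊥_w} = {d : Hom(Σ^i S, d) = 0 for 0 ≤ i ≤ w}. Then Z = S^{⊥_w} = {}^{⊥_w}S (i.e., also Hom(d, Σ^{-i}S) = 0 for 0 ≤ i ≤ w for all d ∈ Z), and Z is itself an 𝕊_{-w}-subcategory. -/
import Mathlib


open CategoryTheory CategoryTheory.Limits CategoryTheory.Pretriangulated

universe v u u₂

namespace SMSPaper

/-- Serre duality data on a `k`-linear category, encoded by trace maps. -/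
structure SerreData (k : Type u₂) [Field k] (D : Type u) [Category.{v} D] [Preadditive D]
    [Linear k D] where
  F : D ⥤ D
  isEquiv : F.IsEquivalence
  tr : (x : D) → (x ⟶ F.obj x) →ₗ[k] k
  comm : ∀ {x y : D} (f : x ⟶ y) (g : y ⟶ F.obj x), tr x (f ≫ g) = tr y (g ≫ F.map f)
  nondeg₁ : ∀ {x y : D} (f : x ⟶ y), (∀ g : y ⟶ F.obj x, tr x (f ≫ g) = 0) → f = 0
  nondeg₂ : ∀ {x y : D} (g : y ⟶ F.obj x), (∀ f : x ⟶ y, tr x (f ≫ g) = 0) → g = 0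

variable {C : Type u} [Category.{v} C] [Preadditive C] [HasZeroObject C]
  [HasShift C ℤ] [∀ n : ℤ, (shiftFunctor C n).Additive] [Pretriangulated C]

/-- `f : x ⟶ d` is a right `X`-approximation of `d`. -/
def IsRightApprox (X : Set C) {x d : C} (f : x ⟶ d) : Prop :=
  x ∈ X ∧ ∀ s ∈ X, ∀ g : s ⟶ d, ∃ h : s ⟶ x, h ≫ f = g

/-- `f : d ⟶ x` is a left `X`-approximation of `d`. -/
def IsLeftApprox (X : Set C) {d x : C} (f : d ⟶ x) : Prop :=
  x ∈ X ∧ ∀ s ∈ X, ∀ g : d ⟶ s, ∃ h : x ⟶ s, f ≫ h = g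

def RightMinimal {x d : C} (f : x ⟶ d) : Prop :=
  ∀ g : x ⟶ x, g ≫ f = f → IsIso g

def LeftMinimal {d x : C} (f : d ⟶ x) : Prop :=
  ∀ g : x ⟶ x, f ≫ g = f → IsIso g

def IsMinimalRightApprox (X : Set C) {x d : C} (f : x ⟶ d) : Prop :=
  IsRightApprox X f ∧ RightMinimal f

def IsMinimalLeftApprox (X : Set C) {d x : C} (f : d ⟶ x) : Prop :=
  IsLeftApprox X f ∧ LeftMinimal f

def ContravariantlyFinite (X : Set C) : Prop :=
  ∀ d : C, ∃ (x : C) (f : x ⟶ d), IsRightApprox X f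

def CovariantlyFinite (X : Set C) : Prop :=
  ∀ d : C, ∃ (x : C) (f : d ⟶ x), IsLeftApprox X f

def FunctoriallyFinite (X : Set C) : Prop :=
  ContravariantlyFinite X ∧ CovariantlyFinite X

/-- `X * Y`: objects arising as extensions of an object of `Y` by an object of `X`. -/
def extStar (X Y : Set C) : Set C :=
  {d | ∃ (x y : C) (f : x ⟶ d) (g : d ⟶ y) (h : y ⟶ x⟦(1 : ℤ)⟧),
    (Triangle.mk f g h ∈ distTriang C) ∧ x ∈ X ∧ y ∈ Y}

def ExtClosed (X : Set C) : Prop := extStar X X ⊆ X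

/-- extension closure: smallest extension-closed subcategory containing `X`. -/
def extClosure (X : Set C) : Set C := ⋂₀ {T : Set C | X ⊆ T ∧ ExtClosed T}

/-- closure under direct summands. -/
def sumClosure (X : Set C) : Set C :=
  {d | ∃ x ∈ X, ∃ (i : d ⟶ x) (r : x ⟶ d), i ≫ r = 𝟙 d}

/-- `Sn S n` is `(S)_{n+1}` of the paper: `(S)_1 = S`, `(S)_{n+1} = (S * (S)_n)^⊕`. -/
def Sn (S : Set C) : ℕ → Set C
  | 0 => S
  | n + 1 => sumClosure (extStar S (Sn S n))

def shiftSet (i : ℤ) (S : Set C) : Set C :=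
  {d | ∃ s ∈ S, Nonempty (d ≅ s⟦i⟧)}

/-- `S ∪ Σ⁻¹S ∪ ⋯ ∪ Σ^{1-w}S`. -/
def shiftUnion (w : ℕ) (S : Set C) : Set C :=
  {d | ∃ i : ℕ, i < w ∧ d ∈ shiftSet (-(i : ℤ)) S}

/-- `starChain S n = ⟨S⟩ * Σ⁻¹⟨S⟩ * ⋯ * Σ^{-n}⟨S⟩`. -/
def starChain (S : Set C) : ℕ → Set C
  | 0 => extClosure S
  | n + 1 => extStar (starChain S n) (shiftSet (-((n : ℤ) + 1)) (extClosure S))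

def rightPerp (S : Set C) : Set C := {d | ∀ s ∈ S, ∀ f : s ⟶ d, f = 0}

def leftPerp (S : Set C) : Set C := {d | ∀ s ∈ S, ∀ f : d ⟶ s, f = 0}

/-- `S^{⊥_w} = {d : Hom(Σ^i S, d) = 0 for 0 ≤ i ≤ w}`. -/
def perpW (w : ℕ) (S : Set C) : Set C :=
  {d | ∀ i : ℕ, i ≤ w → ∀ s ∈ S, ∀ f : s⟦(i : ℤ)⟧ ⟶ d, f = 0}

/-- `^{⊥_w}S = {d : Hom(d, Σ^{-i} S) = 0 for 0 ≤ i ≤ w}`. -/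
def wPerp (w : ℕ) (S : Set C) : Set C :=
  {d | ∀ i : ℕ, i ≤ w → ∀ s ∈ S, ∀ f : d ⟶ s⟦(-(i : ℤ))⟧, f = 0}

def Indec (x : C) : Prop :=
  ¬ IsZero x ∧ ∀ e : x ⟶ x, e ≫ e = e → e = 0 ∨ e = 𝟙 x

/-- `(X, Y)` is an `S`-mutation pair. -/
def IsMutationPair (S X Y : Set C) : Prop :=
  X = leftPerp S ∩ rightPerp S ∩ leftPerp (shiftSet (-1) S) ∩
      shiftSet (-1) (extStar (extClosure S) Y) ∧
  Y = leftPerp S ∩ rightPerp S ∩ rightPerp (shiftSet 1 S) ∩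
      shiftSet 1 (extStar X (extClosure S))

/-- `r` is the right mutation of `d` with respect to `S`. -/
def IsRightMutation (S : Set C) (d r : C) : Prop :=
  ∃ (s : C) (α : s ⟶ d⟦(1 : ℤ)⟧) (β : d⟦(1 : ℤ)⟧ ⟶ r) (γ : r ⟶ s⟦(1 : ℤ)⟧),
    (Triangle.mk α β γ ∈ distTriang C) ∧ IsMinimalRightApprox (extClosure S) α

/-- `l` is the left mutation of `d` with respect to `S`. -/
def IsLeftMutation (S : Set C) (d l : C) : Prop :=
  ∃ (s : C) (β : l ⟶ d⟦(-1 : ℤ)⟧) (α : d⟦(-1 : ℤ)⟧ ⟶ s) (γ : s ⟶ l⟦(1 : ℤ)⟧),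
    (Triangle.mk β α γ ∈ distTriang C) ∧ IsMinimalLeftApprox (extClosure S) α

/-- the extension closure of `R` computed inside the triangulated category `Z`,
whose triangles `x → z → y → x⟨1⟩` come from a cone `c` of `x → z` in `D` together
with a minimal right `⟨S⟩`-approximation triangle `s → c → y → Σs`. -/
inductive zExtClosure (S Z R : Set C) : C → Prop
  | of (r : C) (hr : r ∈ R) : zExtClosure S Z R r
  | ext (x z y c s : C) (f : x ⟶ z) (g₁ : z ⟶ c) (h₁ : c ⟶ x⟦(1 : ℤ)⟧)
      (α : s ⟶ c) (β : c ⟶ y) (γ : y ⟶ s⟦(1 : ℤ)⟧)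
      (hT : Triangle.mk f g₁ h₁ ∈ distTriang C)
      (hT' : Triangle.mk α β γ ∈ distTriang C)
      (hmin : IsMinimalRightApprox (extClosure S) α)
      (hz : z ∈ Z)
      (hx : zExtClosure S Z R x) (hy : zExtClosure S Z R y) :
      zExtClosure S Z R z

variable (k : Type u₂) [Field k] [Linear k C]

/-- orthogonal collection: `dim Hom(x, y) = δ_{x,y}`. -/
def IsOrthogonalCollection (S : Set C) : Prop :=
  (∀ x ∈ S, Module.finrank k (x ⟶ x) = 1) ∧
  ∀ x ∈ S, ∀ y ∈ S, x ≠ y → ∀ f : x ⟶ y, f = 0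

/-- `w`-orthogonal collection. -/
def IsWOrthogonal (w : ℕ) (S : Set C) : Prop :=
  IsOrthogonalCollection k S ∧
  ∀ i : ℕ, 1 ≤ i → i ≤ w - 1 → ∀ x ∈ S, ∀ y ∈ S, ∀ f : x⟦(i : ℤ)⟧ ⟶ y, f = 0

/-- `w`-simple-minded system. -/
def IsWSMS (w : ℕ) (S : Set C) : Prop :=
  IsWOrthogonal k w S ∧ ∀ d : C, d ∈ sumClosure (extClosure (shiftUnion w S))

def IsRightRiedtmann (w : ℕ) (S : Set C) : Prop :=
  IsWOrthogonal k w S ∧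
  ∀ d : C, (∀ i : ℕ, i < w → ∀ s ∈ S, ∀ f : d⟦(i : ℤ)⟧ ⟶ s, f = 0) → IsZero d

def IsLeftRiedtmann (w : ℕ) (S : Set C) : Prop :=
  IsWOrthogonal k w S ∧
  ∀ d : C, (∀ i : ℕ, i < w → ∀ s ∈ S, ∀ f : s⟦(i : ℤ)⟧ ⟶ d, f = 0) → IsZero d

/-- `S` is an `𝕊_w`-subcategory (`𝕊_w = 𝕊 Σ^{-w}`). -/
def IsSwSubcat (SD : SerreData k C) (w : ℤ) (S : Set C) : Prop :=
  ∀ x : C, x ∈ S ↔ ∃ s ∈ S, Nonempty (x ≅ SD.F.obj (s⟦-w⟧))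

/-- the universal map `z → 𝕊z`, corresponding to the trace functional on `End(z)`. -/
def IsUniversalMap (SD : SerreData k C) (z : C) (h : z ⟶ SD.F.obj z) : Prop :=
  SD.tr z h = 1 ∧ ∀ f : z ⟶ z, ¬ IsIso f → SD.tr z (f ≫ h) = 0


section Aux

/-- all maps `a ⟶ b` vanish. -/
def Van (a b : C) : Prop := ∀ f : a ⟶ b, f = 0

lemma van_of_iso {a a' b b' : C} (ea : a ≅ a') (eb : b ≅ b') (h : Van a b) :
    Van a' b' := by
  intro f
  have h0 : ea.hom ≫ f ≫ eb.inv = 0 := h _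
  have : f ≫ eb.inv = 0 := by
    rw [← cancel_epi ea.hom, h0, comp_zero]
  rw [← cancel_mono eb.inv, this, zero_comp]

lemma van_serre (SD : SerreData k C) {a b : C} : Van a b ↔ Van b (SD.F.obj a) := by
  constructor
  · intro h g
    exact SD.nondeg₂ g (fun f => by rw [h f, zero_comp, map_zero])
  · intro h f
    exact SD.nondeg₁ f (fun g => by rw [h g, comp_zero, map_zero])

lemma van_shiftR (n : ℤ) {a b : C} (h : Van a b) : Van (a⟦n⟧) (b⟦n⟧) := by
  intro g
  have : g = (shiftFunctor C n).map ((shiftFunctor C n).preimage g) :=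
    ((shiftFunctor C n).map_preimage g).symm
  rw [this, h ((shiftFunctor C n).preimage g), Functor.map_zero]

/-- `a⟦m⟧⟦n⟧ ≅ a⟦p⟧` when `m + n = p`. -/
def shiftShiftIso (a : C) (m n p : ℤ) (h : m + n = p) : (a⟦m⟧)⟦n⟧ ≅ a⟦p⟧ :=
  ((shiftFunctorAdd' C m n p h).app a).symm

end Aux

/-- In the reduction setup, `Z = S^{⊥_w} = {}^{⊥_w}S` and `Z` is an `𝕊_{-w}`-subcategory. -/
theorem stmt15 (SD : SerreData k C) (w : ℕ) (hw : 1 ≤ w)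
    (S : Set C) (hS : IsWOrthogonal k w S) (hsw : IsSwSubcat k SD (-(w : ℤ)) S)
    (hff : FunctoriallyFinite (extClosure S)) :
    perpW w S = wPerp w S ∧ IsSwSubcat k SD (-(w : ℤ)) (perpW w S) := by
  unfold IsSwSubcat at hsw
  simp only [neg_neg] at hsw
  -- membership-as-Van reformulations
  have hperp : ∀ d : C, d ∈ perpW w S ↔ ∀ i : ℕ, i ≤ w → ∀ s ∈ S, Van (s⟦(i : ℤ)⟧) d := by
    intro d; rfl
  have hwperp : ∀ d : C, d ∈ wPerp w S ↔ ∀ i : ℕ, i ≤ w → ∀ s ∈ S, Van d (s⟦(-(i : ℤ))⟧) := by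
    intro d; rfl
  have heq : perpW w S = wPerp w S := by
    ext d
    rw [hperp, hwperp]
    constructor
    · intro H i hi s hs
      obtain ⟨s', hs', ⟨e⟩⟩ := (hsw s).mp hs
      have h0 : Van (s'⟦((w - i : ℕ) : ℤ)⟧) d := H (w - i) (Nat.sub_le w i) s' hs'
      rw [show ((w - i : ℕ) : ℤ) = (w : ℤ) - (i : ℤ) by omega] at h0
      have h1 : Van ((s'⟦(w : ℤ) - (i : ℤ)⟧)⟦(i : ℤ)⟧) (d⟦(i : ℤ)⟧) := van_shiftR _ h0
      have h2 : Van (s'⟦(w : ℤ)⟧) (d⟦(i : ℤ)⟧) :=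
        van_of_iso (shiftShiftIso s' _ _ _ (by ring)) (Iso.refl _) h1
      have h3 : Van (d⟦(i : ℤ)⟧) (SD.F.obj (s'⟦(w : ℤ)⟧)) := (van_serre k SD).mp h2
      have h4 : Van (d⟦(i : ℤ)⟧) s := van_of_iso (Iso.refl _) e.symm h3
      have h5 : Van ((d⟦(i : ℤ)⟧)⟦(-(i : ℤ))⟧) (s⟦(-(i : ℤ))⟧) := van_shiftR _ h4
      exact van_of_iso (shiftShiftNeg d (i : ℤ)) (Iso.refl _) h5
    · intro H i hi s hs
      have hσ : SD.F.obj (s⟦(w : ℤ)⟧) ∈ S := (hsw _).mpr ⟨s, hs, ⟨Iso.refl _⟩⟩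
      have h0 : Van d ((SD.F.obj (s⟦(w : ℤ)⟧))⟦(-((w - i : ℕ) : ℤ))⟧) :=
        H (w - i) (Nat.sub_le w i) _ hσ
      rw [show (-((w - i : ℕ) : ℤ)) = (i : ℤ) - (w : ℤ) by omega] at h0
      have h1 := van_shiftR ((w : ℤ) - (i : ℤ)) h0
      have h2 : Van (d⟦(w : ℤ) - (i : ℤ)⟧) (SD.F.obj (s⟦(w : ℤ)⟧)) :=
        van_of_iso (Iso.refl _)
          ((shiftShiftIso _ _ _ (0 : ℤ) (by ring)) ≪≫ (shiftFunctorZero C ℤ).app _) h1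
      have h3 : Van (s⟦(w : ℤ)⟧) (d⟦(w : ℤ) - (i : ℤ)⟧) := (van_serre k SD).mpr h2
      have h4 := van_shiftR ((i : ℤ) - (w : ℤ)) h3
      exact van_of_iso (shiftShiftIso s _ _ ((i : ℤ)) (by ring))
        ((shiftShiftIso d _ _ (0 : ℤ) (by ring)) ≪≫ (shiftFunctorZero C ℤ).app _) h4
  refine ⟨heq, ?_⟩
  unfold IsSwSubcat
  simp only [neg_neg]
  haveI := SD.isEquiv
  intro x
  constructor
  · intro hx
    refine ⟨(SD.F.inv.obj x)⟦(-(w : ℤ))⟧, ?_, ⟨?_⟩⟩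
    · rw [heq, hwperp]
      intro i hi s hs
      have h0 : Van (s⟦((w - i : ℕ) : ℤ)⟧) x := hx (w - i) (Nat.sub_le w i) s hs
      rw [show ((w - i : ℕ) : ℤ) = (w : ℤ) - (i : ℤ) by omega] at h0
      have h1 : Van (s⟦(w : ℤ) - (i : ℤ)⟧) (SD.F.obj (SD.F.inv.obj x)) :=
        van_of_iso (Iso.refl _) (SD.F.asEquivalence.counitIso.app x).symm h0
      have h2 : Van (SD.F.inv.obj x) (s⟦(w : ℤ) - (i : ℤ)⟧) := (van_serre k SD).mpr h1
      have h3 := van_shiftR (-(w : ℤ)) h2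
      exact van_of_iso (Iso.refl _)
        (shiftShiftIso s _ _ (-(i : ℤ)) (by ring)) h3
    · exact ((SD.F.mapIso (shiftNegShift (SD.F.inv.obj x) (w : ℤ))) ≪≫
        SD.F.asEquivalence.counitIso.app x).symm
  · rintro ⟨z, hz, ⟨e⟩⟩
    rw [heq, hwperp] at hz
    rw [hperp]
    intro i hi s hs
    have h0 : Van z (s⟦(-((w - i : ℕ) : ℤ))⟧) := hz (w - i) (Nat.sub_le w i) s hs
    rw [show (-((w - i : ℕ) : ℤ)) = (i : ℤ) - (w : ℤ) by omega] at h0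
    have h1 := van_shiftR ((w : ℤ)) h0
    have h2 : Van (z⟦(w : ℤ)⟧) (s⟦(i : ℤ)⟧) :=
      van_of_iso (Iso.refl _) (shiftShiftIso s _ _ _ (by ring)) h1
    have h3 : Van (s⟦(i : ℤ)⟧) (SD.F.obj (z⟦(w : ℤ)⟧)) := (van_serre k SD).mp h2
    exact van_of_iso (Iso.refl _) e.symm h3

end SMSPaper
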